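/- Let ψ_v, ψ_u ∈ R ∪ {+∞} (not both +∞) with finite values nonnegative, and τ_v, τ_u > 0. Define ψ_min as the minimum over ξ ∈ [0,1] of f(ξ) = ξψ_v + (1-ξ)ψ_u + sqrt(ξ^2 + (1-ξ)^2)(ξτ_v + (1-ξ)τ_u) (interpreting terms with +∞ appropriately, so that ξ = 0 or 1 is forced if one value is infinite). Then ψ_min ≥ min(ψ_v, ψ_u) + (1/√2)·min(τ_v, τ_u) > min(ψ_v, ψ_u), i.e., the t-FMM update strictly increases values, which guarantees causality of the marching order. -/

import Mathlib

/-- the t-FMM quadrant update strictly increases values. With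
ψ_v, ψ_u ∈ ℝ ∪ {+∞} (not both +∞), finite values nonnegative, and τ_v, τ_u > 0,
the minimum over ξ ∈ [0,1] of f(ξ) = ξψ_v + (1-ξ)ψ_u + √(ξ²+(1-ξ)²)(ξτ_v+(1-ξ)τ_u)
is at least min(ψ_v,ψ_u) + (1/√2)·min(τ_v,τ_u) > min(ψ_v,ψ_u). -/
theorem tfmm_causality (ψv ψu : EReal)
    (hvbot : ψv ≠ ⊥) (hubot : ψu ≠ ⊥)
    (hnot : ¬(ψv = ⊤ ∧ ψu = ⊤))
    (hv0 : 0 ≤ ψv) (hu0 : 0 ≤ ψu)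
    (τv τu : ℝ) (hτv : 0 < τv) (hτu : 0 < τu)
    (f : ℝ → EReal)
    (hf : ∀ ξ : ℝ, f ξ = (ξ : EReal) * ψv + ((1 - ξ : ℝ) : EReal) * ψu
      + ((Real.sqrt (ξ ^ 2 + (1 - ξ) ^ 2) * (ξ * τv + (1 - ξ) * τu) : ℝ) : EReal)) :
    (min ψv ψu + (((1 / Real.sqrt 2) * min τv τu : ℝ) : EReal)
        ≤ ⨅ ξ : Set.Icc (0 : ℝ) 1, f ξ.1) ∧
    (min ψv ψu < ⨅ ξ : Set.Icc (0 : ℝ) 1, f ξ.1) := by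
  have hs2 : (0:ℝ) < Real.sqrt 2 := Real.sqrt_pos.2 (by norm_num)
  have hc : (0:ℝ) < (1 / Real.sqrt 2) * min τv τu :=
    mul_pos (by positivity) (lt_min hτv hτu)
  have key : ∀ ξ : ℝ, ξ ∈ Set.Icc (0:ℝ) 1 →
      min ψv ψu + (((1 / Real.sqrt 2) * min τv τu : ℝ) : EReal) ≤ f ξ := by
    intro ξ ⟨h0, h1⟩
    rw [hf]
    have h1' : (0:ℝ) ≤ 1 - ξ := by linarith
    -- convex combination ≥ min in EReal
    have hA : min ψv ψu ≤ (ξ : EReal) * ψv + ((1 - ξ : ℝ) : EReal) * ψu := by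
      rcases min_le_iff.mp (le_refl (min ψv ψu)) with _ | _ <;>
      rcases le_total ψv ψu with h | h
      all_goals {
        first
        | · rw [min_eq_left h]
            calc ψv = ((ξ : EReal) + ((1 - ξ : ℝ) : EReal)) * ψv := by
                  rw [← EReal.coe_add]; norm_num
              _ = (ξ : EReal) * ψv + ((1 - ξ : ℝ) : EReal) * ψv :=
                  EReal.right_distrib_of_nonneg (by exact_mod_cast h0) (by exact_mod_cast h1')
              _ ≤ (ξ : EReal) * ψv + ((1 - ξ : ℝ) : EReal) * ψu := by
                  exact add_le_add_right (mul_le_mul_of_nonneg_left h (by exact_mod_cast h1')) _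
        | · rw [min_eq_right h]
            calc ψu = ((ξ : EReal) + ((1 - ξ : ℝ) : EReal)) * ψu := by
                  rw [← EReal.coe_add]; norm_num
              _ = (ξ : EReal) * ψu + ((1 - ξ : ℝ) : EReal) * ψu :=
                  EReal.right_distrib_of_nonneg (by exact_mod_cast h0) (by exact_mod_cast h1')
              _ ≤ (ξ : EReal) * ψv + ((1 - ξ : ℝ) : EReal) * ψu := by
                  exact add_le_add_left (mul_le_mul_of_nonneg_left h (by exact_mod_cast h0)) _ }
    have hB : (1 / Real.sqrt 2) * min τv τu ≤
        Real.sqrt (ξ ^ 2 + (1 - ξ) ^ 2) * (ξ * τv + (1 - ξ) * τu) := by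
      have hb1 : 1 / Real.sqrt 2 ≤ Real.sqrt (ξ ^ 2 + (1 - ξ) ^ 2) := by
        rw [one_div, ← Real.sqrt_inv]
        exact Real.sqrt_le_sqrt (by nlinarith [sq_nonneg (2*ξ - 1)])
      have hb2 : min τv τu ≤ ξ * τv + (1 - ξ) * τu := by
        rcases le_total τv τu with h | h
        · rw [min_eq_left h]; nlinarith
        · rw [min_eq_right h]; nlinarith
      exact mul_le_mul hb1 hb2 (le_of_lt (lt_min hτv hτu)) (Real.sqrt_nonneg _)
    calc min ψv ψu + (((1 / Real.sqrt 2) * min τv τu : ℝ) : EReal)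
        ≤ ((ξ : EReal) * ψv + ((1 - ξ : ℝ) : EReal) * ψu)
            + (((1 / Real.sqrt 2) * min τv τu : ℝ) : EReal) := add_le_add_left hA _
      _ ≤ _ := add_le_add_right (EReal.coe_le_coe_iff.2 hB) _
  have hinf : min ψv ψu + (((1 / Real.sqrt 2) * min τv τu : ℝ) : EReal)
      ≤ ⨅ ξ : Set.Icc (0 : ℝ) 1, f ξ.1 :=
    le_iInf fun ξ => key ξ.1 ξ.2
  refine ⟨hinf, lt_of_lt_of_le ?_ hinf⟩
  have hmt : min ψv ψu ≠ ⊤ := by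
    rcases le_total ψv ψu with h | h
    · rw [min_eq_left h]; intro hv; exact hnot ⟨hv, top_le_iff.mp (hv ▸ h)⟩
    · rw [min_eq_right h]; intro hu; exact hnot ⟨top_le_iff.mp (hu ▸ h), hu⟩
  have hmb : min ψv ψu ≠ ⊥ := by
    rcases le_total ψv ψu with h | h
    · rw [min_eq_left h]; exact hvbot
    · rw [min_eq_right h]; exact hubot
  lift min ψv ψu to ℝ using ⟨hmt, hmb⟩ with m
  rw [← EReal.coe_add, EReal.coe_lt_coe_iff]
  linarith
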